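/- If G is a connected finite simple graph with m ≥ 1 edges and k ≥ 2, then χ'_dom(P_{k+1}) ≤ χ'_dom(G^{1/k}) ≤ m · χ'_dom(P_{k+1}), where P_{k+1} is the path on k+1 vertices. -/

import Mathlib

open SimpleGraph

/-- Two edges of a simple graph are adjacent if they are distinct and share an endpoint. -/
def EdgeAdj {V : Type*} (G : SimpleGraph V) (e f : G.edgeSet) : Prop :=
  e ≠ f ∧ ∃ v, v ∈ (e : Sym2 V) ∧ v ∈ (f : Sym2 V)

/-- A dominated edge coloring of `G` with colors in `Fin n`: a proper edge coloring such that
every color class is dominated by some edge. -/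
def IsDomEdgeColoring {V : Type*} (G : SimpleGraph V) {n : ℕ} (c : G.edgeSet → Fin n) : Prop :=
  (∀ e f, EdgeAdj G e f → c e ≠ c f) ∧
  (∀ i : Fin n, ∃ e : G.edgeSet, ∀ f, c f = i → f = e ∨ EdgeAdj G e f)

/-- The dominated edge chromatic number: the least number of colors in a
dominated edge coloring. -/
noncomputable def domEdgeChrom {V : Type*} (G : SimpleGraph V) : ℕ :=
  sInf {n | ∃ c : G.edgeSet → Fin n, IsDomEdgeColoring G c}

/-- `D` is a total edge dominating set: every edge of `G` is adjacent to an edge of `D`. -/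
def IsTotalEdgeDom {V : Type*} (G : SimpleGraph V) (D : Set G.edgeSet) : Prop :=
  ∀ e : G.edgeSet, ∃ f ∈ D, EdgeAdj G e f

/-- The total edge domination number of `G`. -/
noncomputable def totalEdgeDomNumber {V : Type*} (G : SimpleGraph V) : ℕ :=
  sInf {n | ∃ D : Set G.edgeSet, D.Finite ∧ D.ncard = n ∧ IsTotalEdgeDom G D}

/-- The `k`-subdivision `G^{1/k}` of `G`: every edge of `G` is replaced by a path of length
`k`. Internal vertices of the superedge replacing an edge `e` are pairs `(e, l)` with
`l < k - 1`, indexed by their distance (minus one) from the smaller endpoint of `e`. -/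
def subdivision {V : Type*} [LinearOrder V] (G : SimpleGraph V) (k : ℕ) :
    SimpleGraph (V ⊕ G.edgeSet × Fin (k - 1)) :=
  SimpleGraph.fromRel (fun a b =>
    match a, b with
    | .inl u, .inl w => k = 1 ∧ G.Adj u w
    | .inl u, .inr (e, l) =>
        ((l : ℕ) = 0 ∧ u = Sym2.inf (e : Sym2 V)) ∨
        ((l : ℕ) = k - 2 ∧ u = Sym2.sup (e : Sym2 V))
    | .inr _, .inl _ => False
    | .inr (e, l), .inr (e', l') => e = e' ∧ (l : ℕ) + 1 = (l' : ℕ))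

-- generic lemmas
lemma domEdgeChrom_le {V : Type*} {G : SimpleGraph V} {n : ℕ} (c : G.edgeSet → Fin n)
    (hc : IsDomEdgeColoring G c) : domEdgeChrom G ≤ n :=
  Nat.sInf_le ⟨c, hc⟩

lemma domEdgeChrom_set_nonempty {V : Type*} (G : SimpleGraph V) [Finite G.edgeSet] :
    {n | ∃ c : G.edgeSet → Fin n, IsDomEdgeColoring G c}.Nonempty := by
  refine ⟨Nat.card G.edgeSet, Finite.equivFin G.edgeSet, ?_, ?_⟩
  · intro e f h hc
    exact h.1 ((Finite.equivFin G.edgeSet).injective hc)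
  · intro i
    refine ⟨(Finite.equivFin G.edgeSet).symm i, fun f hf => Or.inl ?_⟩
    have := congrArg (Finite.equivFin G.edgeSet).symm hf
    exact ((Finite.equivFin G.edgeSet).symm_apply_apply f).symm.trans this

lemma domEdgeChrom_spec {V : Type*} (G : SimpleGraph V) [Finite G.edgeSet] :
    ∃ c : G.edgeSet → Fin (domEdgeChrom G), IsDomEdgeColoring G c :=
  Nat.sInf_mem (domEdgeChrom_set_nonempty G)

section Sub
variable {V : Type*} [LinearOrder V] {G : SimpleGraph V} {k : ℕ}

noncomputable def qv (e : G.edgeSet) (x : Fin (k + 1)) : V ⊕ G.edgeSet × Fin (k - 1) :=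
  if h0 : (x : ℕ) = 0 then .inl (Sym2.inf (e : Sym2 V))
  else if hkx : (x : ℕ) = k then .inl (Sym2.sup (e : Sym2 V))
  else .inr (e, ⟨(x : ℕ) - 1, by have := x.2; omega⟩)

lemma inf_ne_sup (e : G.edgeSet) : Sym2.inf (e : Sym2 V) ≠ Sym2.sup (e : Sym2 V) := by
  obtain ⟨z, hz⟩ := e
  induction z using Sym2.ind with
  | _ a b =>
    rw [SimpleGraph.mem_edgeSet] at hz
    simp only [Sym2.inf_mk, Sym2.sup_mk]
    exact fun h => hz.ne (inf_eq_sup.mp h)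

lemma qv_injective (hk : 2 ≤ k) (e : G.edgeSet) : Function.Injective (qv (k := k) e) := by
  intro x y h
  have hx := x.2
  have hy := y.2
  unfold qv at h
  split_ifs at h with h1 h2 h3 h4 h5 h6 h7 h8 <;>
    simp_all only [Sum.inl.injEq, Sum.inr.injEq, Prod.mk.injEq, Fin.mk.injEq] <;>
    first
      | (exact Fin.ext (by omega))
      | (exact absurd h (inf_ne_sup e))
      | (exact absurd h.symm (inf_ne_sup e))
      | (exact Fin.ext (by omega))
end Sub

section Sub2
variable {V : Type*} [LinearOrder V] {G : SimpleGraph V} {k : ℕ}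

lemma subdivision_adj_qv (hk : 2 ≤ k) (e : G.edgeSet) (x y : Fin (k + 1)) :
    (subdivision G k).Adj (qv e x) (qv e y) ↔ (pathGraph (k + 1)).Adj x y := by
  have hx := x.2
  have hy := y.2
  have hne := inf_ne_sup e
  rw [pathGraph_adj]
  unfold qv
  split_ifs with h1 h2 h3 h4 h5 h6 h7 h8 <;>
    simp only [subdivision, SimpleGraph.fromRel_adj, ne_eq, Sum.inl.injEq, Sum.inr.injEq,
      Prod.mk.injEq, Fin.mk.injEq, Sum.inl.injEq, false_and, and_false, or_false, false_or,
      Sum.inr.injEq, not_false_iff] <;>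
    constructor <;> intro h <;>
    first
      | omega
      | (exfalso; omega)
      | skip
  all_goals
    first
      | omega
      | (obtain ⟨hA, hB⟩ := h
         rcases hB with ⟨ha, hb⟩ | ⟨ha, hb⟩ <;>
           first
             | omega
             | (exact absurd hb hne)
             | (exact absurd hb.symm hne))
      | (exact ⟨by simp; omega, by simp; omega⟩)
      | (refine ⟨fun hc => (by cases hc), ?_⟩
         first
           | (left; exact ⟨by omega, by trivial⟩)
           | (right; exact ⟨by omega, by trivial⟩))

end Sub2

section Sub3
variable {V : Type*} [LinearOrder V] {G : SimpleGraph V} {k : ℕ}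

lemma qv_mk_zero {e : G.edgeSet} {j : Fin (k + 1)} (h : (j : ℕ) = 0) :
    qv e j = Sum.inl (Sym2.inf (e : Sym2 V)) := by unfold qv; rw [dif_pos h]

lemma qv_mk_last {e : G.edgeSet} {j : Fin (k + 1)} (hk : 2 ≤ k) (h : (j : ℕ) = k) :
    qv e j = Sum.inl (Sym2.sup (e : Sym2 V)) := by
  unfold qv; rw [dif_neg (by omega), dif_pos h]

lemma qv_mk_mid {e : G.edgeSet} {j : Fin (k + 1)} (h0 : (j : ℕ) ≠ 0) (h1 : (j : ℕ) ≠ k) :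
    qv e j = Sum.inr (e, ⟨(j : ℕ) - 1, by have := j.2; omega⟩) := by
  unfold qv; rw [dif_neg h0, dif_neg h1]

lemma subdivision_adj_class (hk : 2 ≤ k) {a b : V ⊕ G.edgeSet × Fin (k - 1)}
    (h : (subdivision G k).Adj a b) :
    ∃ (e : G.edgeSet) (x y : Fin (k + 1)), (pathGraph (k + 1)).Adj x y ∧ a = qv e x ∧ b = qv e y := by
  suffices H : ∀ a b : V ⊕ G.edgeSet × Fin (k - 1),
      (match a, b with
        | .inl u, .inl w => k = 1 ∧ G.Adj u w
        | .inl u, .inr (e, l) =>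
            ((l : ℕ) = 0 ∧ u = Sym2.inf (e : Sym2 V)) ∨
            ((l : ℕ) = k - 2 ∧ u = Sym2.sup (e : Sym2 V))
        | .inr _, .inl _ => False
        | .inr (e, l), .inr (e', l') => e = e' ∧ (l : ℕ) + 1 = (l' : ℕ)) →
      ∃ (e : G.edgeSet) (x y : Fin (k + 1)), (pathGraph (k + 1)).Adj x y ∧ a = qv e x ∧ b = qv e y by
    obtain ⟨hne, h | h⟩ := (SimpleGraph.fromRel_adj _ a b).mp h
    · exact H a b h
    · obtain ⟨e, x, y, hadj, hb, ha⟩ := H b a h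
      exact ⟨e, y, x, hadj.symm, ha, hb⟩
  intro a b hr
  rcases a with u | ⟨e, l⟩ <;> rcases b with w | ⟨e', l'⟩
  · exact absurd hr.1 (by omega)
  · rcases hr with ⟨hl, hu⟩ | ⟨hl, hu⟩
    · refine ⟨e', ⟨0, by omega⟩, ⟨1, by omega⟩, ?_, ?_, ?_⟩
      · rw [pathGraph_adj]; left; simp
      · rw [qv_mk_zero rfl, hu]
      · rw [qv_mk_mid (by simp) (by simp; omega)]
        exact congrArg _ (congrArg _ (Fin.ext (by simp [hl])))
    · refine ⟨e', ⟨k, by omega⟩, ⟨k - 1, by omega⟩, ?_, ?_, ?_⟩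
      · rw [pathGraph_adj]; right; simp; omega
      · rw [qv_mk_last hk rfl, hu]
      · rw [qv_mk_mid (by simp; omega) (by simp; omega)]
        exact congrArg _ (congrArg _ (Fin.ext (by simp [hl]; omega)))
  · exact hr.elim
  · obtain ⟨he, hl⟩ := hr
    subst he
    have h2 := l.2
    have h3 := l'.2
    refine ⟨e, ⟨(l : ℕ) + 1, by omega⟩, ⟨(l : ℕ) + 2, by omega⟩, ?_, ?_, ?_⟩
    · rw [pathGraph_adj]; left; simp
    · rw [qv_mk_mid (by simp) (by simp; omega)]
      exact congrArg _ (congrArg _ (Fin.ext (by simp)))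
    · rw [qv_mk_mid (by simp) (by simp; omega)]
      exact congrArg _ (congrArg _ (Fin.ext (by simp; omega)))

end Sub3

section Sub4
variable {V : Type*} [LinearOrder V] {G : SimpleGraph V} {k : ℕ}

lemma qv_map_mem (hk : 2 ≤ k) (e : G.edgeSet) (F : (pathGraph (k + 1)).edgeSet) :
    Sym2.map (qv e) (F : Sym2 (Fin (k + 1))) ∈ (subdivision G k).edgeSet := by
  obtain ⟨z, hz⟩ := F
  induction z using Sym2.ind with
  | _ x y =>
    rw [SimpleGraph.mem_edgeSet] at hz
    show Sym2.map (qv e) s(x, y) ∈ _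
    rw [Sym2.map_pair_eq, SimpleGraph.mem_edgeSet]
    exact (subdivision_adj_qv hk e x y).mpr hz

lemma edge_class (hk : 2 ≤ k) (h : (subdivision G k).edgeSet) :
    ∃ (e : G.edgeSet) (F : (pathGraph (k + 1)).edgeSet),
      (h : Sym2 (V ⊕ G.edgeSet × Fin (k - 1))) = Sym2.map (qv e) (F : Sym2 (Fin (k + 1))) := by
  obtain ⟨z, hz⟩ := h
  induction z using Sym2.ind with
  | _ a b =>
    rw [SimpleGraph.mem_edgeSet] at hz
    obtain ⟨e, x, y, hadj, ha, hb⟩ := subdivision_adj_class hk hz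
    exact ⟨e, ⟨s(x, y), hadj⟩, by show s(a,b) = _; rw [Sym2.map_pair_eq, ← ha, ← hb]⟩

end Sub4


/-- If `G` is connected with `m ≥ 1` edges and `k ≥ 2`, then
`χ'_dom(P_{k+1}) ≤ χ'_dom(G^{1/k}) ≤ m · χ'_dom(P_{k+1})`. -/
theorem stmt_16 {V : Type*} [Fintype V] [LinearOrder V] (G : SimpleGraph V)
    (hG : G.Connected) (m : ℕ) (hm : m = G.edgeSet.ncard) (hm1 : 1 ≤ m)
    (k : ℕ) (hk : 2 ≤ k) :
    domEdgeChrom (SimpleGraph.pathGraph (k + 1)) ≤ domEdgeChrom (subdivision G k) ∧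
    domEdgeChrom (subdivision G k) ≤ m * domEdgeChrom (SimpleGraph.pathGraph (k + 1)) := by
  classical
  haveI : Fintype G.edgeSet := Fintype.ofFinite _
  set H := subdivision G k with hH
  set P := pathGraph (k + 1) with hP
  obtain ⟨c, hcp, hcd⟩ := domEdgeChrom_spec H
  obtain ⟨c₀, hc₀p, hc₀d⟩ := domEdgeChrom_spec P
  have hGne : G.edgeSet.Nonempty := by
    apply Set.nonempty_of_ncard_ne_zero; omega
  obtain ⟨e0v, he0⟩ := hGne
  let e0 : G.edgeSet := ⟨e0v, he0⟩
  have hqmem : ∀ (e : G.edgeSet) (F : P.edgeSet),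
      Sym2.map (qv e) (F : Sym2 (Fin (k + 1))) ∈ H.edgeSet := fun e F => qv_map_mem hk e F
  constructor
  · -- lower bound
    apply domEdgeChrom_le (fun F : P.edgeSet => c ⟨Sym2.map (qv e0) F, hqmem e0 F⟩)
    constructor
    · rintro E F ⟨hEF, x, hxE, hxF⟩
      apply hcp
      refine ⟨?_, qv e0 x, Sym2.mem_map.mpr ⟨x, hxE, rfl⟩, Sym2.mem_map.mpr ⟨x, hxF, rfl⟩⟩
      intro hc
      exact hEF (Subtype.ext (Sym2.map.injective (qv_injective hk e0) (congrArg Subtype.val hc)))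
    · intro i
      obtain ⟨f, hf⟩ := hcd i
      by_cases hfim : ∃ F0 : P.edgeSet, f = ⟨Sym2.map (qv e0) F0, hqmem e0 F0⟩
      · obtain ⟨F0, rfl⟩ := hfim
        refine ⟨F0, fun F hF => ?_⟩
        rcases hf _ hF with heq | ⟨hne, w, hwf, hwF⟩
        · left
          exact Subtype.ext (Sym2.map.injective (qv_injective hk e0) (congrArg Subtype.val heq))
        · right
          obtain ⟨x, hx, hxw⟩ := Sym2.mem_map.mp hwF
          obtain ⟨x0, hx0, hx0w⟩ := Sym2.mem_map.mp hwf
          have hxx : x0 = x := qv_injective hk e0 (hx0w.trans hxw.symm)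
          refine ⟨fun hc => hne (by rw [hc]), x0, hx0, hxx ▸ hx⟩
      · by_cases hcls : ∃ F1 : P.edgeSet, c ⟨Sym2.map (qv e0) F1, hqmem e0 F1⟩ = i
        · obtain ⟨F1, hF1⟩ := hcls
          refine ⟨F1, fun F hF => ?_⟩
          have hadj1 : EdgeAdj H f ⟨Sym2.map (qv e0) F1, hqmem e0 F1⟩ := by
            rcases hf _ hF1 with heq | ha
            · exact absurd ⟨F1, heq.symm⟩ hfim
            · exact ha
          have hadjF : EdgeAdj H f ⟨Sym2.map (qv e0) F, hqmem e0 F⟩ := by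
            rcases hf _ hF with heq | ha
            · exact absurd ⟨F, heq.symm⟩ hfim
            · exact ha
          obtain ⟨hne1, w1, hw1f, hw1⟩ := hadj1
          obtain ⟨hneF, w, hwf, hw⟩ := hadjF
          obtain ⟨x1, hx1, hx1w⟩ := Sym2.mem_map.mp hw1
          obtain ⟨x, hx, hxw⟩ := Sym2.mem_map.mp hw
          by_cases hww : w = w1
          · have hxx : x = x1 := qv_injective hk e0 (by rw [hxw, hx1w, hww])
            by_cases hFF : F = F1
            · left; exact hFF
            · right
              exact ⟨fun hc => hFF hc.symm, x1, hx1, hxx ▸ hx⟩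
          · exfalso
            have hf2 : (f : Sym2 _) = s(w, w1) := (Sym2.mem_and_mem_iff hww).mp ⟨hwf, hw1f⟩
            rw [← hxw, ← hx1w] at hf2
            have hadj : H.Adj (qv e0 x) (qv e0 x1) := by
              have hm2 := f.2
              rw [hf2, SimpleGraph.mem_edgeSet] at hm2
              exact hm2
            have hpadj := (subdivision_adj_qv hk e0 x x1).mp hadj
            exact hfim ⟨⟨s(x, x1), hpadj⟩, Subtype.ext (by rw [hf2]; exact (Sym2.map_pair_eq _ _ _).symm)⟩
        · push_neg at hcls
          refine ⟨⟨s(⟨0, by omega⟩, ⟨1, by omega⟩), ?_⟩, fun F hF => absurd hF (hcls F)⟩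
          rw [SimpleGraph.mem_edgeSet, hP, pathGraph_adj]
          left; simp
  · -- upper bound
    have hcard : Nat.card G.edgeSet = m := by rw [Nat.card_coe_set_eq, hm]
    let idx : G.edgeSet ≃ Fin m := Finite.equivFinOfCardEq hcard
    have hclass : ∀ h : H.edgeSet, ∃ (e : G.edgeSet) (F : P.edgeSet),
        (h : Sym2 (V ⊕ G.edgeSet × Fin (k - 1))) = Sym2.map (qv e) (F : Sym2 (Fin (k + 1))) :=
      fun h => edge_class hk h
    choose se pe hpe using hclass
    apply domEdgeChrom_le (fun h : H.edgeSet => finProdFinEquiv (idx (se h), c₀ (pe h)))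
    constructor
    · rintro h h' ⟨hne, w, hw, hw'⟩ hceq
      obtain ⟨h1, h2⟩ := Prod.mk.injEq .. |>.mp (finProdFinEquiv.injective hceq)
      have hse : se h = se h' := idx.injective h1
      rw [hpe h] at hw
      rw [hpe h'] at hw'
      obtain ⟨x, hx, hxw⟩ := Sym2.mem_map.mp hw
      obtain ⟨x', hx', hxw'⟩ := Sym2.mem_map.mp hw'
      rw [hse] at hxw
      have hxx : x = x' := qv_injective hk (se h') (hxw.trans hxw'.symm)
      have hFne : pe h ≠ pe h' := by
        intro hc
        exact hne (Subtype.ext (by rw [hpe h, hpe h', hc, hse]))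
      exact hc₀p (pe h) (pe h') ⟨hFne, x, hx, hxx ▸ hx'⟩ h2
    · intro j
      set a := (finProdFinEquiv.symm j).1 with ha
      set i := (finProdFinEquiv.symm j).2 with hi
      obtain ⟨d, hd⟩ := hc₀d i
      set e := idx.symm a with he
      refine ⟨⟨Sym2.map (qv e) d, hqmem e d⟩, fun h hcj => ?_⟩
      have hsymm : (idx (se h), c₀ (pe h)) = finProdFinEquiv.symm j := by
        rw [← hcj, Equiv.symm_apply_apply]
      have h1 : idx (se h) = a := by rw [ha, ← hsymm]
      have h2 : c₀ (pe h) = i := by rw [hi, ← hsymm]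
      have hse : se h = e := by rw [he, ← h1, Equiv.symm_apply_apply]
      rcases hd (pe h) h2 with hdd | ⟨hdne, x, hxd, hxF⟩
      · left
        exact Subtype.ext (by rw [hpe h, hdd, hse])
      · right
        refine ⟨?_, qv e x, Sym2.mem_map.mpr ⟨x, hxd, rfl⟩, ?_⟩
        · intro hc
          apply hdne
          apply Subtype.ext
          apply Sym2.map.injective (qv_injective hk e)
          have := congrArg Subtype.val hc
          rw [hpe h, hse] at this
          exact this
        · rw [hpe h, hse]
          exact Sym2.mem_map.mpr ⟨x, hxF, rfl⟩
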